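/- Let G : Set S × Set S → Set S be completely additive in the product, and define H : Set S → Set S by H(Y) := LFP(X ↦ G(X, Y)) (the least fixed point in the first coordinate). Then H is completely additive: for every nonempty family {Y_i}, H(⋃_i Y_i) = ⋃_i H(Y_i). -/
import Mathlib


def CompletelyAdditive {S : Type} (F : Set S → Set S) : Prop :=
  ∀ (ι : Type) [Nonempty ι] (Y : ι → Set S), F (⋃ i, Y i) = ⋃ i, F (Y i)

def CompletelyAdditive2 {S : Type} (G : Set S → Set S → Set S) : Prop :=
  ∀ (ι : Type) [Nonempty ι] (A B : ι → Set S),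
    G (⋃ i, A i) (⋃ i, B i) = ⋃ i, G (A i) (B i)

def setLfp {S : Type} (F : Set S → Set S) : Set S :=
  ⋂₀ {X : Set S | F X ⊆ X}

lemma setLfp_le {S : Type} (F : Set S → Set S) {X : Set S} (hX : F X ⊆ X) :
    setLfp F ⊆ X := Set.sInter_subset_of_mem hX

lemma ca2_mono {S : Type} {G : Set S → Set S → Set S} (h : CompletelyAdditive2 G)
    {A A' B B' : Set S} (hA : A ⊆ A') (hB : B ⊆ B') : G A B ⊆ G A' B' := by
  have := h Bool (fun b => if b then A' else A) (fun b => if b then B' else B)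
  have h1 : (⋃ b : Bool, if b then A' else A) = A' := by
    apply Set.Subset.antisymm
    · exact Set.iUnion_subset (fun b => by cases b <;> simpa)
    · exact Set.subset_iUnion_of_subset true (by simp)
  have h2 : (⋃ b : Bool, if b then B' else B) = B' := by
    apply Set.Subset.antisymm
    · exact Set.iUnion_subset (fun b => by cases b <;> simpa)
    · exact Set.subset_iUnion_of_subset true (by simp)
  rw [h1, h2] at this
  rw [this]
  exact Set.subset_iUnion_of_subset false (by simp)

lemma setLfp_prefixed {S : Type} {G : Set S → Set S → Set S}
    (h : CompletelyAdditive2 G) (Y : Set S) :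
    G (setLfp (fun X => G X Y)) Y ⊆ setLfp (fun X => G X Y) := by
  intro x hx
  rw [setLfp, Set.mem_sInter]
  intro X hX
  exact hX (ca2_mono h (setLfp_le _ hX) (le_refl Y) hx)

theorem lfp_preserves_completeAdditivity {S : Type}
    (G : Set S → Set S → Set S) (h : CompletelyAdditive2 G) :
    CompletelyAdditive (fun Y => setLfp (fun X => G X Y)) := by
  intro ι _ Y
  apply Set.Subset.antisymm
  · -- lfp of union ⊆ union of lfps: the union is a prefixed point
    apply setLfp_le
    have : G (⋃ i, setLfp (fun X => G X (Y i))) (⋃ i, Y i)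
        = ⋃ i, G (setLfp (fun X => G X (Y i))) (Y i) :=
      h ι _ _
    rw [this]
    exact Set.iUnion_mono fun i => setLfp_prefixed h (Y i)
  · apply Set.iUnion_subset
    intro i x hx
    simp only [setLfp, Set.mem_sInter, Set.mem_setOf_eq]
    intro X hX
    have : setLfp (fun X => G X (Y i)) ⊆ X := by
      apply setLfp_le
      exact (ca2_mono h (le_refl X) (Set.subset_iUnion Y i)).trans hX
    exact this hx
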